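/- Let I, J ∈ S_min with I ≠ J. Then Σ_{L ∈ S_min, L ≠ I, L ≠ J} μ(L)·T₁(sup(I, L))·T₂(sup(L, J)) = μ(sup(I, J))·(1 − 2·p_{sup(I,J)}⁻¹)·T₁(sup(I, J))·T₂(sup(I, J)) + Σ_{L : sup(I,J) < L ≤ K} μ(L)(1 − p_L⁻¹)T₁(L)T₂(L) + [Σ_{L : I < L < sup(I,J)} μ(L)(1 − p_L⁻¹)T₁(L)]·T₂(sup(I, J)) + T₁(sup(I, J))·[Σ_{L : J < L < sup(I,J)} μ(L)(1 − p_L⁻¹)T₂(L)]. -/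

import Mathlib

open scoped Classical

section Helpers

variable {S : Type*} [Fintype S] [SemilatticeSup S]

/-- In a finite order, below any `x < A` there is a cover of `A` above `x`. -/
lemma my_exists_cov {x A : S} (h : x < A) : ∃ c, x ≤ c ∧ c ⋖ A := by
  classical
  obtain ⟨c, hc, hmax⟩ := Finset.exists_maximal
    (s := Finset.univ.filter (fun y => x ≤ y ∧ y < A))
    ⟨x, by simp [h]⟩
  simp only [Finset.mem_filter, Finset.mem_univ, true_and] at hc hmax
  refine ⟨c, hc.1, hc.2, fun d hcd hdA => ?_⟩
  exact lt_irrefl c (hcd.trans_le (hmax (y := d) ⟨hc.1.trans hcd.le, hdA⟩ hcd.le))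

omit [Fintype S] in
/-- Uniqueness of the cover of `A` above a given element. -/
lemma my_cov_unique (hchain : ∀ x y z : S, x ≤ y → x ≤ z → y ≤ z ∨ z ≤ y)
    {x A c c' : S} (hc : c ⋖ A) (hc' : c' ⋖ A) (h1 : x ≤ c) (h2 : x ≤ c') :
    c = c' := by
  rcases hchain x c c' h1 h2 with h | h
  · by_contra hne
    exact hc.2 (lt_of_le_of_ne h hne) hc'.1
  · by_contra hne
    exact hc'.2 (lt_of_le_of_ne h (Ne.symm hne)) hc.1

omit [Fintype S] in
lemma sup_eq_of (hchain : ∀ x y z : S, x ≤ y → x ≤ z → y ≤ z ∨ z ≤ y)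
    {I L c A : S} (hIc : I ≤ c) (hcA : c ⋖ A) (hLA : L ≤ A) (hLc : ¬ L ≤ c) :
    I ⊔ L = A := by
  have h1 : I ⊔ L ≤ A := sup_le (hIc.trans hcA.1.le) hLA
  rcases hchain I c (I ⊔ L) hIc le_sup_left with h | h
  · have hlt : c < I ⊔ L := lt_of_le_of_ne h (by rintro rfl; exact hLc le_sup_right)
    by_contra hne
    exact hcA.2 hlt (lt_of_le_of_ne h1 hne)
  · exact absurd (le_sup_right.trans h) hLc

variable (hchain : ∀ x y z : S, x ≤ y → x ≤ z → y ≤ z ∨ z ≤ y)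
variable (p : S → ℕ) (hp : ∀ L : S, ¬ IsMin L → 2 ≤ p L)
variable (hcard : ∀ L : S, ¬ IsMin L →
      (Finset.univ.filter (fun J : S => J ⋖ L)).card = p L)
variable (μ : S → ℝ) (hμ : ∀ L J : S, J ⋖ L → μ J = μ L / p L)

include hchain p hp hcard hμ in
/-- The total weight of the minimal elements below `A` is `μ A`. -/
lemma leaf_sum (A : S) :
    ∑ L ∈ Finset.univ.filter (fun L => IsMin L ∧ L ≤ A), μ L = μ A := by
  classical
  induction A using WellFoundedLT.induction with
  | _ A ih =>
  by_cases hA : IsMin A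
  · have hs : Finset.univ.filter (fun L => IsMin L ∧ L ≤ A) = {A} := by
      ext L
      simp only [Finset.mem_filter, Finset.mem_univ, true_and, Finset.mem_singleton]
      constructor
      · rintro ⟨hL, hLA⟩; exact le_antisymm hLA (hA hLA)
      · rintro rfl; exact ⟨hA, le_rfl⟩
    rw [hs, Finset.sum_singleton]
  · have hset : Finset.univ.filter (fun L => IsMin L ∧ L ≤ A)
        = (Finset.univ.filter (fun c => c ⋖ A)).biUnion
            (fun c => Finset.univ.filter (fun L => IsMin L ∧ L ≤ c)) := by
      ext L
      simp only [Finset.mem_filter, Finset.mem_univ, true_and, Finset.mem_biUnion]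
      constructor
      · rintro ⟨hL, hLA⟩
        have hlt : L < A := lt_of_le_of_ne hLA (by rintro rfl; exact hA hL)
        obtain ⟨c, hLc, hcA⟩ := my_exists_cov hlt
        exact ⟨c, hcA, hL, hLc⟩
      · rintro ⟨c, hcA, hL, hLc⟩
        exact ⟨hL, hLc.trans hcA.1.le⟩
    have hdisj : (↑(Finset.univ.filter (fun c : S => c ⋖ A)) : Set S).PairwiseDisjoint
        (fun c => Finset.univ.filter (fun L => IsMin L ∧ L ≤ c)) := by
      intro c hc c' hc' hne
      simp only [Finset.coe_filter, Set.mem_setOf_eq] at hc hc'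
      refine Finset.disjoint_left.mpr ?_
      intro L hL hL'
      simp only [Finset.mem_filter, Finset.mem_univ, true_and] at hL hL'
      exact hne (my_cov_unique hchain hc.2 hc'.2 hL.2 hL'.2)
    rw [hset, Finset.sum_biUnion hdisj]
    have hstep : ∀ c ∈ Finset.univ.filter (fun c : S => c ⋖ A),
        (∑ L ∈ Finset.univ.filter (fun L => IsMin L ∧ L ≤ c), μ L) = μ A / p A := by
      intro c hc
      simp only [Finset.mem_filter, Finset.mem_univ, true_and] at hc
      rw [ih c hc.1, hμ A c hc]
    rw [Finset.sum_congr rfl hstep, Finset.sum_const, hcard A hA, nsmul_eq_mul]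
    have hpA : (p A : ℝ) ≠ 0 := by
      have := hp A hA; positivity
    field_simp

include hchain p hp hcard hμ in
/-- The total weight of the minimal leaves `L` with `I ⊔ L = A`, for minimal
`I < A`. -/
lemma fiber_sum {I A : S} (hI : IsMin I) (hIA : I < A) :
    ∑ L ∈ Finset.univ.filter (fun L => IsMin L ∧ I ⊔ L = A), μ L
      = μ A - μ A / p A := by
  classical
  obtain ⟨c, hIc, hcA⟩ := my_exists_cov hIA
  have hsub : Finset.univ.filter (fun L => IsMin L ∧ L ≤ c)
      ⊆ Finset.univ.filter (fun L => IsMin L ∧ L ≤ A) := by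
    intro L hL
    simp only [Finset.mem_filter, Finset.mem_univ, true_and] at hL ⊢
    exact ⟨hL.1, hL.2.trans hcA.1.le⟩
  have hset : Finset.univ.filter (fun L => IsMin L ∧ I ⊔ L = A)
      = Finset.univ.filter (fun L => IsMin L ∧ L ≤ A)
        \ Finset.univ.filter (fun L => IsMin L ∧ L ≤ c) := by
    ext L
    simp only [Finset.mem_filter, Finset.mem_univ, true_and, Finset.mem_sdiff,
      not_and]
    constructor
    · rintro ⟨hL, hs⟩
      refine ⟨⟨hL, hs ▸ le_sup_right⟩, fun _ hLc => ?_⟩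
      have : I ⊔ L ≤ c := sup_le hIc hLc
      rw [hs] at this
      exact absurd this (fun h => lt_irrefl _ (hcA.1.trans_le h))
    · rintro ⟨⟨hL, hLA⟩, hnc⟩
      exact ⟨hL, sup_eq_of hchain hIc hcA hLA (hnc hL)⟩
  rw [hset, Finset.sum_sdiff_eq_sub hsub,
    leaf_sum hchain p hp hcard μ hμ, leaf_sum hchain p hp hcard μ hμ,
    hμ A c hcA]

include hchain p hp hcard hμ in
/-- The total weight of the minimal leaves `L` with `I ⊔ L = J ⊔ L = I ⊔ J`. -/
lemma fiber_sum₂ {I J : S} (hI : IsMin I) (hJ : IsMin J) (hIJ : I ≠ J) :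
    ∑ L ∈ Finset.univ.filter
        (fun L => IsMin L ∧ I ⊔ L = I ⊔ J ∧ J ⊔ L = I ⊔ J), μ L
      = μ (I ⊔ J) - 2 * (μ (I ⊔ J) / p (I ⊔ J)) := by
  classical
  set M := I ⊔ J with hM
  have hIM : I < M := lt_of_le_of_ne le_sup_left
    (by intro h; exact hIJ (le_antisymm (hI (h ▸ le_sup_right)) (h ▸ le_sup_right)))
  have hJM : J < M := lt_of_le_of_ne le_sup_right
    (by intro h; exact hIJ (le_antisymm (h ▸ le_sup_left) (hJ (h ▸ le_sup_left))))
  obtain ⟨cI, hIcI, hcIM⟩ := my_exists_cov hIM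
  obtain ⟨cJ, hJcJ, hcJM⟩ := my_exists_cov hJM
  have hcc : cI ≠ cJ := by
    rintro rfl
    exact (fun h => lt_irrefl _ (hcIM.1.trans_le h)) (sup_le hIcI hJcJ)
  have hsubI : Finset.univ.filter (fun L => IsMin L ∧ L ≤ cI)
      ⊆ Finset.univ.filter (fun L => IsMin L ∧ L ≤ M) := by
    intro L hL
    simp only [Finset.mem_filter, Finset.mem_univ, true_and] at hL ⊢
    exact ⟨hL.1, hL.2.trans hcIM.1.le⟩
  have hsubJ : Finset.univ.filter (fun L => IsMin L ∧ L ≤ cJ)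
      ⊆ Finset.univ.filter (fun L => IsMin L ∧ L ≤ M) := by
    intro L hL
    simp only [Finset.mem_filter, Finset.mem_univ, true_and] at hL ⊢
    exact ⟨hL.1, hL.2.trans hcJM.1.le⟩
  have hdisj : Disjoint (Finset.univ.filter (fun L => IsMin L ∧ L ≤ cI))
      (Finset.univ.filter (fun L => IsMin L ∧ L ≤ cJ)) := by
    refine Finset.disjoint_left.mpr ?_
    intro L hL hL'
    simp only [Finset.mem_filter, Finset.mem_univ, true_and] at hL hL'
    exact hcc (my_cov_unique hchain hcIM hcJM hL.2 hL'.2)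
  have hset : Finset.univ.filter (fun L => IsMin L ∧ I ⊔ L = M ∧ J ⊔ L = M)
      = Finset.univ.filter (fun L => IsMin L ∧ L ≤ M)
        \ (Finset.univ.filter (fun L => IsMin L ∧ L ≤ cI)
            ∪ Finset.univ.filter (fun L => IsMin L ∧ L ≤ cJ)) := by
    ext L
    simp only [Finset.mem_filter, Finset.mem_univ, true_and, Finset.mem_sdiff,
      Finset.mem_union, not_or, not_and]
    constructor
    · rintro ⟨hL, hs1, hs2⟩
      refine ⟨⟨hL, hs1 ▸ le_sup_right⟩, fun _ hLc => ?_, fun _ hLc => ?_⟩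
      · exact (fun h => lt_irrefl _ (hcIM.1.trans_le h)) (hs1 ▸ sup_le hIcI hLc)
      · exact (fun h => lt_irrefl _ (hcJM.1.trans_le h)) (hs2 ▸ sup_le hJcJ hLc)
    · rintro ⟨⟨hL, hLM⟩, hn1, hn2⟩
      exact ⟨hL, sup_eq_of hchain hIcI hcIM hLM (hn1 hL),
        sup_eq_of hchain hJcJ hcJM hLM (hn2 hL)⟩
  have hsubU : (Finset.univ.filter (fun L => IsMin L ∧ L ≤ cI)
      ∪ Finset.univ.filter (fun L => IsMin L ∧ L ≤ cJ))
      ⊆ Finset.univ.filter (fun L => IsMin L ∧ L ≤ M) :=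
    Finset.union_subset hsubI hsubJ
  rw [hset, Finset.sum_sdiff_eq_sub hsubU, Finset.sum_union hdisj,
    leaf_sum hchain p hp hcard μ hμ, leaf_sum hchain p hp hcard μ hμ,
    leaf_sum hchain p hp hcard μ hμ, hμ M cI hcIM, hμ M cJ hcJM]
  ring

end Helpers

/-- In a finite directed tree `S` (finite partial order with greatest element `K`,
binary suprema, totally ordered up-sets), where every non-minimal vertex `L`
has exactly `p L ≥ 2` children and the weight `μ` satisfies `μ K > 0` and
`μ J = μ L / p L` for every child `J` of `L`, and `T₁, T₂ : S → ℝ` are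
arbitrary: for minimal `I ≠ J`,
`Σ_{L ∈ S_min, L ≠ I, L ≠ J} μ(L) T₁(sup(I,L)) T₂(sup(L,J))` equals the sum of
the four terms of Lemma 4 (products of sums over the order intervals
`sup(I,J) < L ≤ K`, `I < L < sup(I,J)`, `J < L < sup(I,J)`). -/
theorem product_replica_matrices_off_diagonal
    {S : Type*} [Fintype S] [SemilatticeSup S]
    (K : S) (hK : ∀ x : S, x ≤ K)
    (hchain : ∀ x y z : S, x ≤ y → x ≤ z → y ≤ z ∨ z ≤ y)
    (p : S → ℕ) (hp : ∀ L : S, ¬ IsMin L → 2 ≤ p L)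
    (hcard : ∀ L : S, ¬ IsMin L →
      (Finset.univ.filter (fun J : S => J ⋖ L)).card = p L)
    (μ : S → ℝ) (hμK : 0 < μ K)
    (hμ : ∀ L J : S, J ⋖ L → μ J = μ L / p L)
    (T₁ T₂ : S → ℝ)
    (I J : S) (hI : IsMin I) (hJ : IsMin J) (hIJ : I ≠ J) :
    ∑ L ∈ Finset.univ.filter (fun L : S => IsMin L ∧ L ≠ I ∧ L ≠ J),
        μ L * T₁ (I ⊔ L) * T₂ (L ⊔ J) =
      μ (I ⊔ J) * (1 - 2 * (p (I ⊔ J) : ℝ)⁻¹) * T₁ (I ⊔ J) * T₂ (I ⊔ J)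
      + ∑ L ∈ Finset.univ.filter (fun L : S => I ⊔ J < L ∧ L ≤ K),
          μ L * (1 - (p L : ℝ)⁻¹) * T₁ L * T₂ L
      + (∑ L ∈ Finset.univ.filter (fun L : S => I < L ∧ L < I ⊔ J),
          μ L * (1 - (p L : ℝ)⁻¹) * T₁ L) * T₂ (I ⊔ J)
      + T₁ (I ⊔ J) *
          (∑ L ∈ Finset.univ.filter (fun L : S => J < L ∧ L < I ⊔ J),
            μ L * (1 - (p L : ℝ)⁻¹) * T₂ L) := by
  classical
  set M := I ⊔ J with hM
  have hIM : I < M := lt_of_le_of_ne le_sup_left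
    (by intro h; exact hIJ (le_antisymm (hI (h ▸ le_sup_right)) (h ▸ le_sup_right)))
  have hJM : J < M := lt_of_le_of_ne le_sup_right
    (by intro h; exact hIJ (le_antisymm (h ▸ le_sup_left) (hJ (h ▸ le_sup_left))))
  have key1 : ∀ L : S, I ⊔ L < M → J ⊔ L = M := by
    intro L hs
    have hLM : L ≤ M := le_sup_right.trans hs.le
    have h1 : J ⊔ L ≤ M := sup_le le_sup_right hLM
    rcases hchain L (I ⊔ L) (J ⊔ L) le_sup_right le_sup_right with h | h
    · exact le_antisymm h1 (sup_le (le_sup_left.trans h) le_sup_left)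
    · exact absurd (sup_le le_sup_left (le_sup_left.trans h)) (fun h => lt_irrefl _ (hs.trans_le h))
  have key2 : ∀ L : S, J ⊔ L < M → I ⊔ L = M := by
    intro L hs
    have hLM : L ≤ M := le_sup_right.trans hs.le
    have h1 : I ⊔ L ≤ M := sup_le le_sup_left hLM
    rcases hchain L (J ⊔ L) (I ⊔ L) le_sup_right le_sup_right with h | h
    · exact le_antisymm h1 (sup_le le_sup_left (le_sup_left.trans h))
    · exact absurd (sup_le (le_sup_left.trans h) le_sup_left) (fun h => lt_irrefl _ (hs.trans_le h))
  have key4 : ∀ L : S, M < I ⊔ L → J ⊔ L = I ⊔ L := by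
    intro L hs
    have h1 : J ⊔ L ≤ I ⊔ L := sup_le (le_sup_right.trans hs.le) le_sup_right
    have h2 : M ≤ J ⊔ L := by
      rcases hchain J M (J ⊔ L) le_sup_right le_sup_left with h | h
      · exact h
      · exact absurd (sup_le le_sup_left (le_sup_right.trans h)) (fun h => lt_irrefl _ (hs.trans_le h))
    exact le_antisymm h1 (sup_le (le_sup_left.trans h2) le_sup_right)
  set s1 := Finset.univ.filter (fun L : S => IsMin L ∧ L ≠ I ∧ I ⊔ L < M) with hs1
  set s2 := Finset.univ.filter (fun L : S => IsMin L ∧ L ≠ J ∧ J ⊔ L < M) with hs2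
  set s3 := Finset.univ.filter (fun L : S => IsMin L ∧ I ⊔ L = M ∧ J ⊔ L = M) with hs3
  set s4 := Finset.univ.filter (fun L : S => IsMin L ∧ M < I ⊔ L) with hs4
  have hL_ne : ∀ L : S, IsMin L → I ⊔ L = I → L = I := by
    intro L _ h
    have h' : L ≤ I := by rw [← h]; exact le_sup_right
    exact le_antisymm h' (hI h')
  have hL_neJ : ∀ L : S, IsMin L → J ⊔ L = J → L = J := by
    intro L _ h
    have h' : L ≤ J := by rw [← h]; exact le_sup_right
    exact le_antisymm h' (hJ h')
  -- the split of the index set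
  have hsplit : Finset.univ.filter (fun L : S => IsMin L ∧ L ≠ I ∧ L ≠ J)
      = (s1 ∪ s2) ∪ (s3 ∪ s4) := by
    ext L
    simp only [hs1, hs2, hs3, hs4, Finset.mem_filter, Finset.mem_univ, true_and,
      Finset.mem_union]
    constructor
    · rintro ⟨hL, hLI, hLJ⟩
      rcases hchain I (I ⊔ L) M le_sup_left le_sup_left with h | h
      · rcases eq_or_lt_of_le h with heq | hlt
        · have hLM : L ≤ M := by rw [← heq]; exact le_sup_right
          have hJL : J ⊔ L ≤ M := sup_le le_sup_right hLM
          rcases eq_or_lt_of_le hJL with heq2 | hlt2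
          · exact Or.inr (Or.inl ⟨hL, heq, heq2⟩)
          · exact Or.inl (Or.inr ⟨hL, hLJ, hlt2⟩)
        · exact Or.inl (Or.inl ⟨hL, hLI, hlt⟩)
      · rcases eq_or_lt_of_le h with heq | hlt
        · have hLM : L ≤ M := by rw [heq]; exact le_sup_right
          have hJL : J ⊔ L ≤ M := sup_le le_sup_right hLM
          rcases eq_or_lt_of_le hJL with heq2 | hlt2
          · exact Or.inr (Or.inl ⟨hL, heq.symm, heq2⟩)
          · exact Or.inl (Or.inr ⟨hL, hLJ, hlt2⟩)
        · exact Or.inr (Or.inr ⟨hL, hlt⟩)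
    · rintro ((⟨hL, hLI, hs⟩ | ⟨hL, hLJ, hs⟩) | (⟨hL, h1, h2⟩ | ⟨hL, hs⟩))
      · refine ⟨hL, hLI, ?_⟩
        rintro rfl
        exact hs.ne hM.symm
      · refine ⟨hL, ?_, hLJ⟩
        rintro rfl
        exact hs.ne (by rw [sup_comm])
      · refine ⟨hL, ?_, ?_⟩
        · rintro rfl
          rw [sup_idem] at h1
          exact hIM.ne h1
        · rintro rfl
          rw [sup_idem] at h2
          exact hJM.ne h2
      · refine ⟨hL, ?_, ?_⟩
        · rintro rfl
          rw [sup_idem] at hs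
          exact lt_asymm hIM hs
        · rintro rfl
          exact lt_irrefl M (hM ▸ hs)
  -- disjointness
  have d12 : Disjoint s1 s2 := by
    refine Finset.disjoint_left.mpr ?_
    intro L h1 h2
    simp only [hs1, hs2, Finset.mem_filter, Finset.mem_univ, true_and] at h1 h2
    exact absurd (key1 L h1.2.2) h2.2.2.ne
  have d34 : Disjoint s3 s4 := by
    refine Finset.disjoint_left.mpr ?_
    intro L h1 h2
    simp only [hs3, hs4, Finset.mem_filter, Finset.mem_univ, true_and] at h1 h2
    exact absurd h1.2.1 h2.2.ne'
  have d12_34 : Disjoint (s1 ∪ s2) (s3 ∪ s4) := by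
    refine Finset.disjoint_left.mpr ?_
    intro L h1 h2
    simp only [hs1, hs2, hs3, hs4, Finset.mem_filter, Finset.mem_univ, true_and,
      Finset.mem_union] at h1 h2
    rcases h1 with h1 | h1
    · rcases h2 with h2 | h2
      · exact absurd h2.2.1 h1.2.2.ne
      · exact lt_asymm h1.2.2 h2.2
    · rcases h2 with h2 | h2
      · exact absurd h2.2.2 h1.2.2.ne
      · have := key4 L h2.2
        rw [this] at h1
        exact lt_asymm h1.2.2 h2.2
  -- target index sets on the right-hand side
  set t1 := Finset.univ.filter (fun A : S => I < A ∧ A < M) with ht1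
  set t2 := Finset.univ.filter (fun A : S => J < A ∧ A < M) with ht2
  set t4 := Finset.univ.filter (fun A : S => M < A ∧ A ≤ K) with ht4
  -- evaluation of the four pieces
  have e1 : ∑ L ∈ s1, μ L * T₁ (I ⊔ L) * T₂ (L ⊔ J)
      = (∑ A ∈ t1, μ A * (1 - (p A : ℝ)⁻¹) * T₁ A) * T₂ M := by
    have hmap : ∀ L ∈ s1, I ⊔ L ∈ t1 := by
      intro L hL
      simp only [hs1, Finset.mem_filter, Finset.mem_univ, true_and] at hL
      simp only [ht1, Finset.mem_filter, Finset.mem_univ, true_and]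
      exact ⟨lt_of_le_of_ne le_sup_left
        (fun h => hL.2.1 (hL_ne L hL.1 h.symm)), hL.2.2⟩
    rw [← Finset.sum_fiberwise_of_maps_to hmap
      (fun L => μ L * T₁ (I ⊔ L) * T₂ (L ⊔ J)), Finset.sum_mul]
    refine Finset.sum_congr rfl ?_
    intro A hA
    simp only [ht1, Finset.mem_filter, Finset.mem_univ, true_and] at hA
    have hfib : s1.filter (fun L => I ⊔ L = A)
        = Finset.univ.filter (fun L => IsMin L ∧ I ⊔ L = A) := by
      ext L
      simp only [hs1, Finset.filter_filter, Finset.mem_filter, Finset.mem_univ,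
        true_and]
      constructor
      · rintro ⟨⟨hL, _, _⟩, hEq⟩
        exact ⟨hL, hEq⟩
      · rintro ⟨hL, hEq⟩
        refine ⟨⟨hL, ?_, by rw [hEq]; exact hA.2⟩, hEq⟩
        rintro rfl
        rw [sup_idem] at hEq
        exact hA.1.ne hEq
    have hterm : ∀ L ∈ s1.filter (fun L => I ⊔ L = A),
        μ L * T₁ (I ⊔ L) * T₂ (L ⊔ J) = μ L * (T₁ A * T₂ M) := by
      intro L hL
      simp only [hs1, Finset.filter_filter, Finset.mem_filter, Finset.mem_univ,
        true_and] at hL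
      rw [hL.2, sup_comm L J, key1 L hL.1.2.2]
      ring
    rw [Finset.sum_congr rfl hterm, ← Finset.sum_mul, hfib,
      fiber_sum hchain p hp hcard μ hμ hI hA.1]
    rw [div_eq_mul_inv]
    ring
  have e2 : ∑ L ∈ s2, μ L * T₁ (I ⊔ L) * T₂ (L ⊔ J)
      = T₁ M * (∑ A ∈ t2, μ A * (1 - (p A : ℝ)⁻¹) * T₂ A) := by
    have hmap : ∀ L ∈ s2, J ⊔ L ∈ t2 := by
      intro L hL
      simp only [hs2, Finset.mem_filter, Finset.mem_univ, true_and] at hL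
      simp only [ht2, Finset.mem_filter, Finset.mem_univ, true_and]
      exact ⟨lt_of_le_of_ne le_sup_left
        (fun h => hL.2.1 (hL_neJ L hL.1 h.symm)), hL.2.2⟩
    rw [← Finset.sum_fiberwise_of_maps_to hmap
      (fun L => μ L * T₁ (I ⊔ L) * T₂ (L ⊔ J)), Finset.mul_sum]
    refine Finset.sum_congr rfl ?_
    intro A hA
    simp only [ht2, Finset.mem_filter, Finset.mem_univ, true_and] at hA
    have hfib : s2.filter (fun L => J ⊔ L = A)
        = Finset.univ.filter (fun L => IsMin L ∧ J ⊔ L = A) := by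
      ext L
      simp only [hs2, Finset.filter_filter, Finset.mem_filter, Finset.mem_univ,
        true_and]
      constructor
      · rintro ⟨⟨hL, _, _⟩, hEq⟩
        exact ⟨hL, hEq⟩
      · rintro ⟨hL, hEq⟩
        refine ⟨⟨hL, ?_, by rw [hEq]; exact hA.2⟩, hEq⟩
        rintro rfl
        rw [sup_idem] at hEq
        exact hA.1.ne hEq
    have hterm : ∀ L ∈ s2.filter (fun L => J ⊔ L = A),
        μ L * T₁ (I ⊔ L) * T₂ (L ⊔ J) = μ L * (T₁ M * T₂ A) := by
      intro L hL
      simp only [hs2, Finset.filter_filter, Finset.mem_filter, Finset.mem_univ,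
        true_and] at hL
      rw [sup_comm L J, hL.2, key2 L hL.1.2.2]
      ring
    rw [Finset.sum_congr rfl hterm, ← Finset.sum_mul, hfib,
      fiber_sum hchain p hp hcard μ hμ hJ hA.1]
    rw [div_eq_mul_inv]
    ring
  have e3 : ∑ L ∈ s3, μ L * T₁ (I ⊔ L) * T₂ (L ⊔ J)
      = μ M * (1 - 2 * (p M : ℝ)⁻¹) * T₁ M * T₂ M := by
    have hterm : ∀ L ∈ s3, μ L * T₁ (I ⊔ L) * T₂ (L ⊔ J) = μ L * (T₁ M * T₂ M) := by
      intro L hL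
      simp only [hs3, Finset.mem_filter, Finset.mem_univ, true_and] at hL
      rw [hL.2.1, sup_comm L J, hL.2.2]
      ring
    rw [Finset.sum_congr rfl hterm, ← Finset.sum_mul]
    have := fiber_sum₂ hchain p hp hcard μ hμ hI hJ hIJ
    rw [← hM] at this
    rw [hs3, this, div_eq_mul_inv]
    ring
  have e4 : ∑ L ∈ s4, μ L * T₁ (I ⊔ L) * T₂ (L ⊔ J)
      = ∑ A ∈ t4, μ A * (1 - (p A : ℝ)⁻¹) * T₁ A * T₂ A := by
    have hmap : ∀ L ∈ s4, I ⊔ L ∈ t4 := by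
      intro L hL
      simp only [hs4, Finset.mem_filter, Finset.mem_univ, true_and] at hL
      simp only [ht4, Finset.mem_filter, Finset.mem_univ, true_and]
      exact ⟨hL.2, hK _⟩
    rw [← Finset.sum_fiberwise_of_maps_to hmap
      (fun L => μ L * T₁ (I ⊔ L) * T₂ (L ⊔ J))]
    refine Finset.sum_congr rfl ?_
    intro A hA
    simp only [ht4, Finset.mem_filter, Finset.mem_univ, true_and] at hA
    have hfib : s4.filter (fun L => I ⊔ L = A)
        = Finset.univ.filter (fun L => IsMin L ∧ I ⊔ L = A) := by
      ext L
      simp only [hs4, Finset.filter_filter, Finset.mem_filter, Finset.mem_univ,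
        true_and]
      constructor
      · rintro ⟨⟨hL, _⟩, hEq⟩
        exact ⟨hL, hEq⟩
      · rintro ⟨hL, hEq⟩
        exact ⟨⟨hL, by rw [hEq]; exact hA.1⟩, hEq⟩
    have hterm : ∀ L ∈ s4.filter (fun L => I ⊔ L = A),
        μ L * T₁ (I ⊔ L) * T₂ (L ⊔ J) = μ L * (T₁ A * T₂ A) := by
      intro L hL
      simp only [hs4, Finset.filter_filter, Finset.mem_filter, Finset.mem_univ,
        true_and] at hL
      rw [sup_comm L J, key4 L hL.1.2, hL.2]
      ring
    rw [Finset.sum_congr rfl hterm, ← Finset.sum_mul, hfib,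
      fiber_sum hchain p hp hcard μ hμ hI (hIM.trans hA.1)]
    rw [div_eq_mul_inv]
    ring
  rw [hsplit, Finset.sum_union d12_34, Finset.sum_union d12, Finset.sum_union d34,
    e1, e2, e3, e4]
  ring
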